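/- For real numbers h > 0, N > 0, ρ ≥ 0, and α > 1, it holds that α · log(1 + h/(α·ρ + N)) > log(1 + h/(ρ + N)). -/
import Mathlib

theorem stmt_2 (h N ρ α : ℝ) (hh : 0 < h) (hN : 0 < N) (hρ : 0 ≤ ρ) (hα : 1 < α) :
    α * Real.log (1 + h / (α * ρ + N)) > Real.log (1 + h / (ρ + N)) := by
  have hα0 : 0 < α := lt_trans one_pos hα
  have hd1 : 0 < α * ρ + N := by positivity
  have hd2 : 0 < ρ + N := by positivity
  set x := h / (α * ρ + N) with hx
  have hx0 : 0 < x := div_pos hh hd1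
  have key : 1 + h / (ρ + N) < (1 + x) ^ α := by
    have hb : 1 + α * x < (1 + x) ^ α :=
      one_add_mul_self_lt_rpow_one_add (by linarith) hx0.ne' hα
    refine lt_of_le_of_lt ?_ hb
    have : h / (ρ + N) ≤ α * x := by
      rw [hx, mul_div_assoc', div_le_div_iff₀ hd2 hd1]
      nlinarith [mul_pos (mul_pos hh hN) (sub_pos.2 hα)]
    linarith
  have hlog := Real.log_lt_log (by positivity) key
  rw [Real.log_rpow (by linarith)] at hlog; linarith
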